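/- The set Ω = {(x,y) ∈ ℝ² : x² + y² = 1, −y² < 0} = S¹ \ {(1,0), (−1,0)} has exactly two connected components, while for every r > 0 the set S_r = {(x,y) ∈ ℝ² : x² + y² = r², x³ − y² < 0} is nonempty and connected. -/

import Mathlib

open Set Real

noncomputable section
local notation "E2" => EuclideanSpace ℝ (Fin 2)

private lemma cont_arc (r a b : ℝ) :
    Continuous fun t : ℝ => (!₂[r * Real.cos (a + t * (b - a)),
      r * Real.sin (a + t * (b - a))] : E2) := by
  refine (PiLp.continuous_toLp ..).comp ?_
  apply continuous_pi
  intro i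
  fin_cases i <;> simp <;> fun_prop

private lemma joinedIn_arc {S : Set E2} {r a b : ℝ}
    (h : ∀ θ ∈ Set.uIcc a b, (!₂[r * Real.cos θ, r * Real.sin θ] : E2) ∈ S) :
    JoinedIn S !₂[r * Real.cos a, r * Real.sin a] !₂[r * Real.cos b, r * Real.sin b] := by
  have hmem : ∀ t : ℝ, t ∈ Set.Icc (0:ℝ) 1 → a + t * (b - a) ∈ Set.uIcc a b := by
    intro t ht
    rw [← segment_eq_uIcc]
    exact ⟨1 - t, t, by linarith [ht.2], ht.1, by ring, by simp [smul_eq_mul]; ring⟩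
  refine ⟨⟨⟨fun t => !₂[r * Real.cos (a + t * (b - a)), r * Real.sin (a + t * (b - a))], ?_⟩,
      ?_, ?_⟩, ?_⟩
  · exact (cont_arc r a b).comp continuous_subtype_val
  · norm_num
  · norm_num
  · intro t
    exact h _ (hmem t t.2)

private lemma exists_rep {r : ℝ} (hr : 0 < r) (p : E2)
    (h : (p 0) ^ 2 + (p 1) ^ 2 = r ^ 2) :
    ∃ θ : ℝ, -π ≤ θ ∧ θ ≤ π ∧ p = !₂[r * Real.cos θ, r * Real.sin θ] ∧
      (0 ≤ p 1 → 0 ≤ θ) ∧ (p 1 < 0 → θ ≤ 0) := by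
  have hc1 : -1 ≤ p 0 / r := by
    rw [le_div_iff₀ hr]; nlinarith [sq_nonneg (p 1)]
  have hc2 : p 0 / r ≤ 1 := by
    rw [div_le_iff₀ hr]; nlinarith [sq_nonneg (p 1)]
  set θ₀ := Real.arccos (p 0 / r) with hθ₀
  have h0 : 0 ≤ θ₀ := Real.arccos_nonneg _
  have hπ : θ₀ ≤ π := Real.arccos_le_pi _
  have hcos : r * Real.cos θ₀ = p 0 := by
    rw [hθ₀, Real.cos_arccos hc1 hc2]; field_simp
  have hsin : r * Real.sin θ₀ = |p 1| := by
    have hs : 0 ≤ Real.sin θ₀ := Real.sin_nonneg_of_nonneg_of_le_pi h0 hπ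
    have hsq : (r * Real.sin θ₀) ^ 2 = (p 1) ^ 2 := by
      linear_combination r ^ 2 * Real.sin_sq_add_cos_sq θ₀ -
        (r * Real.cos θ₀ + p 0) * hcos - h
    have : |r * Real.sin θ₀| = |p 1| := by
      rw [← Real.sqrt_sq_eq_abs, ← Real.sqrt_sq_eq_abs, hsq]
    rwa [abs_of_nonneg (by positivity)] at this
  rcases le_or_gt 0 (p 1) with hy | hy
  · refine ⟨θ₀, by linarith [Real.pi_pos], hπ, ?_, fun _ => h0, fun hy' => absurd hy (not_le.2 hy')⟩
    ext i
    fin_cases i <;> simp [hcos, hsin, abs_of_nonneg hy]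
  · refine ⟨-θ₀, by linarith, by linarith [Real.pi_pos], ?_, fun hy' => absurd hy' (not_le.2 hy),
      fun _ => by linarith⟩
    ext i
    fin_cases i <;> simp [hcos, hsin, abs_of_neg hy]

private lemma cube_mono {r x x' : ℝ} (hr : 0 < r) (hx : -r ≤ x) (hxr : x ≤ r)
    (hle : x ≤ x') (h' : x' ^ 3 + x' ^ 2 - r ^ 2 < 0) : x ^ 3 + x ^ 2 - r ^ 2 < 0 := by
  rcases le_or_gt x 0 with h0 | h0
  · have hx2 : x ^ 2 ≤ r ^ 2 := by nlinarith
    have hx3 : x ^ 3 ≤ 0 := by nlinarith [sq_nonneg x]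
    rcases eq_or_lt_of_le h0 with h0 | h0
    · rw [← h0]; nlinarith
    · have h2 : 0 < x ^ 2 := by nlinarith
      have h3 : x * x ^ 2 < 0 := mul_neg_of_neg_of_pos h0 h2
      nlinarith
  · have h3 : x ^ 3 ≤ x' ^ 3 := pow_le_pow_left₀ h0.le hle 3
    have h2 : x ^ 2 ≤ x' ^ 2 := pow_le_pow_left₀ h0.le hle 2
    linarith

private lemma circle_arc (r φ : ℝ) :
    (r * Real.cos φ) ^ 2 + (r * Real.sin φ) ^ 2 = r ^ 2 := by
  linear_combination r ^ 2 * Real.sin_sq_add_cos_sq φ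

private lemma Sr_pathConnected {r : ℝ} (hr : 0 < r) :
    IsPathConnected {p : E2 | (p 0) ^ 2 + (p 1) ^ 2 = r ^ 2 ∧ (p 0) ^ 3 - (p 1) ^ 2 < 0} := by
  set S := {p : E2 | (p 0) ^ 2 + (p 1) ^ 2 = r ^ 2 ∧ (p 0) ^ 3 - (p 1) ^ 2 < 0} with hS
  have hbπ : (!₂[r * Real.cos π, r * Real.sin π] : E2) = !₂[-r, 0] := by
    norm_num [Real.cos_pi, Real.sin_pi]
  have hbπ' : (!₂[r * Real.cos (-π), r * Real.sin (-π)] : E2) = !₂[-r, 0] := by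
    norm_num [Real.cos_pi, Real.sin_pi]
  have hb : (!₂[-r, 0] : E2) ∈ S := by
    constructor
    · show (-r) ^ 2 + (0:ℝ) ^ 2 = r ^ 2
      ring
    · show (-r) ^ 3 - (0:ℝ) ^ 2 < 0
      nlinarith [pow_pos hr 3]
  refine ⟨!₂[-r, 0], hb, ?_⟩
  intro p hp
  obtain ⟨θ, hθ1, hθ2, hpeq, hpos, hneg⟩ := exists_rep hr p hp.1
  have hp0 : p 0 = r * Real.cos θ := by rw [hpeq]; simp
  have key : ∀ φ : ℝ, r * Real.cos φ ≤ p 0 → (!₂[r * Real.cos φ, r * Real.sin φ] : E2) ∈ S := by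
    intro φ hφ
    have hcirc := circle_arc r φ
    have hx1 : -r ≤ r * Real.cos φ := by nlinarith [Real.neg_one_le_cos φ]
    have hx2 : r * Real.cos φ ≤ r := by nlinarith [Real.cos_le_one φ]
    have h' : (p 0) ^ 3 + (p 0) ^ 2 - r ^ 2 < 0 := by nlinarith [hp.1, hp.2]
    have hc := cube_mono hr hx1 hx2 hφ h'
    constructor
    · show (r * Real.cos φ) ^ 2 + (r * Real.sin φ) ^ 2 = r ^ 2
      exact hcirc
    · show (r * Real.cos φ) ^ 3 - (r * Real.sin φ) ^ 2 < 0
      nlinarith [hcirc]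
  rcases le_or_gt 0 (p 1) with hy | hy
  · have h0θ : 0 ≤ θ := hpos hy
    have harc : JoinedIn S !₂[r * Real.cos θ, r * Real.sin θ] !₂[r * Real.cos π, r * Real.sin π] := by
      apply joinedIn_arc
      intro φ hφ
      rw [Set.uIcc_of_le hθ2] at hφ
      apply key
      rw [hp0]
      have := Real.cos_le_cos_of_nonneg_of_le_pi h0θ hφ.2 hφ.1
      nlinarith
    rw [hbπ, ← hpeq] at harc
    exact harc.symm
  · have hθ0 : θ ≤ 0 := hneg hy
    have harc : JoinedIn S !₂[r * Real.cos θ, r * Real.sin θ]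
        !₂[r * Real.cos (-π), r * Real.sin (-π)] := by
      apply joinedIn_arc
      intro φ hφ
      rw [Set.uIcc_comm, Set.uIcc_of_le hθ1] at hφ
      apply key
      rw [hp0]
      have h1 : Real.cos (-φ) ≤ Real.cos (-θ) :=
        Real.cos_le_cos_of_nonneg_of_le_pi (by linarith [hθ0]) (by linarith [hφ.1])
          (by linarith [hφ.2])
      rw [Real.cos_neg, Real.cos_neg] at h1
      nlinarith
    rw [hbπ', ← hpeq] at harc
    exact harc.symm

private lemma upper_pathConnected :
    IsPathConnected {p : E2 | (p 0) ^ 2 + (p 1) ^ 2 = 1 ∧ 0 < p 1} := by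
  set S := {p : E2 | (p 0) ^ 2 + (p 1) ^ 2 = 1 ∧ 0 < p 1} with hS
  have key : ∀ φ : ℝ, 0 < Real.sin φ → (!₂[1 * Real.cos φ, 1 * Real.sin φ] : E2) ∈ S := by
    intro φ hφ
    constructor
    · show (1 * Real.cos φ) ^ 2 + (1 * Real.sin φ) ^ 2 = 1
      nlinarith [Real.sin_sq_add_cos_sq φ]
    · show (0:ℝ) < 1 * Real.sin φ
      linarith
  have hbmem : (!₂[1 * Real.cos (π/2), 1 * Real.sin (π/2)] : E2) ∈ S := by
    apply key; rw [Real.sin_pi_div_two]; norm_num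
  refine ⟨_, hbmem, ?_⟩
  intro p hp
  obtain ⟨θ, hθ1, hθ2, hpeq, hpos, _⟩ := exists_rep one_pos p (by rw [one_pow]; exact hp.1)
  have hsθ : Real.sin θ = p 1 := by rw [hpeq]; simp
  have hy : 0 < Real.sin θ := by rw [hsθ]; exact hp.2
  have h0 : 0 < θ := by
    rcases lt_or_eq_of_le (hpos (by linarith [hp.2] : (0:ℝ) ≤ p 1)) with h | h
    · exact h
    · exfalso; rw [← h, Real.sin_zero] at hy; exact lt_irrefl 0 hy
  have hπθ : θ < π := by
    rcases lt_or_eq_of_le hθ2 with h | h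
    · exact h
    · exfalso; rw [h, Real.sin_pi] at hy; exact lt_irrefl 0 hy
  have harc : JoinedIn S !₂[1 * Real.cos (π/2), 1 * Real.sin (π/2)]
      !₂[1 * Real.cos θ, 1 * Real.sin θ] := by
    apply joinedIn_arc
    intro φ hφ
    have h1 := hφ.1
    have h2 := hφ.2
    apply key
    apply Real.sin_pos_of_pos_of_lt_pi
    · have : 0 < min (π/2) θ := lt_min (by positivity) h0
      linarith
    · have : max (π/2) θ < π := max_lt (by linarith [Real.pi_pos]) hπθ
      linarith
  rw [← hpeq] at harc
  exact harc

private lemma lower_pathConnected :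
    IsPathConnected {p : E2 | (p 0) ^ 2 + (p 1) ^ 2 = 1 ∧ p 1 < 0} := by
  set S := {p : E2 | (p 0) ^ 2 + (p 1) ^ 2 = 1 ∧ p 1 < 0} with hS
  have key : ∀ φ : ℝ, Real.sin φ < 0 → (!₂[1 * Real.cos φ, 1 * Real.sin φ] : E2) ∈ S := by
    intro φ hφ
    constructor
    · show (1 * Real.cos φ) ^ 2 + (1 * Real.sin φ) ^ 2 = 1
      nlinarith [Real.sin_sq_add_cos_sq φ]
    · show (1:ℝ) * Real.sin φ < 0
      linarith
  have hbmem : (!₂[1 * Real.cos (-(π/2)), 1 * Real.sin (-(π/2))] : E2) ∈ S := by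
    apply key; rw [Real.sin_neg, Real.sin_pi_div_two]; norm_num
  refine ⟨_, hbmem, ?_⟩
  intro p hp
  obtain ⟨θ, hθ1, hθ2, hpeq, _, hneg⟩ := exists_rep one_pos p (by rw [one_pow]; exact hp.1)
  have hsθ : Real.sin θ = p 1 := by rw [hpeq]; simp
  have hy : Real.sin θ < 0 := by rw [hsθ]; exact hp.2
  have h0 : θ < 0 := by
    rcases lt_or_eq_of_le (hneg hp.2) with h | h
    · exact h
    · exfalso; rw [h, Real.sin_zero] at hy; exact lt_irrefl 0 hy
  have hπθ : -π < θ := by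
    rcases lt_or_eq_of_le hθ1 with h | h
    · exact h
    · exfalso
      rw [← h] at hy
      have : Real.sin (-π) = 0 := by rw [Real.sin_neg, Real.sin_pi, neg_zero]
      rw [this] at hy; exact lt_irrefl 0 hy
  have harc : JoinedIn S !₂[1 * Real.cos (-(π/2)), 1 * Real.sin (-(π/2))]
      !₂[1 * Real.cos θ, 1 * Real.sin θ] := by
    apply joinedIn_arc
    intro φ hφ
    apply key
    have hmin : -π < min (-(π/2)) θ := lt_min (by linarith [Real.pi_pos]) hπθ
    have hmax : max (-(π/2)) θ < 0 := max_lt (by linarith [Real.pi_pos]) h0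
    have h1 := hφ.1
    have h2 := hφ.2
    have hφ1 : -π < φ := by linarith
    have hφ2 : φ < 0 := by linarith
    have : 0 < Real.sin (-φ) := Real.sin_pos_of_pos_of_lt_pi (by linarith) (by linarith)
    rw [Real.sin_neg] at this
    linarith
  rw [← hpeq] at harc
  exact harc

theorem statement14 :
    ({p : EuclideanSpace ℝ (Fin 2) | (p 0) ^ 2 + (p 1) ^ 2 = 1 ∧ -(p 1) ^ 2 < 0} =
      {p : EuclideanSpace ℝ (Fin 2) | (p 0) ^ 2 + (p 1) ^ 2 = 1} \
        {(!₂[1, 0] : EuclideanSpace ℝ (Fin 2)), (!₂[-1, 0] : EuclideanSpace ℝ (Fin 2))}) ∧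
    Nat.card (ConnectedComponents
      ↥{p : EuclideanSpace ℝ (Fin 2) | (p 0) ^ 2 + (p 1) ^ 2 = 1 ∧ -(p 1) ^ 2 < 0}) = 2 ∧
    ∀ r > (0 : ℝ),
      ({p : EuclideanSpace ℝ (Fin 2) |
          (p 0) ^ 2 + (p 1) ^ 2 = r ^ 2 ∧ (p 0) ^ 3 - (p 1) ^ 2 < 0}).Nonempty ∧
      IsConnected {p : EuclideanSpace ℝ (Fin 2) |
          (p 0) ^ 2 + (p 1) ^ 2 = r ^ 2 ∧ (p 0) ^ 3 - (p 1) ^ 2 < 0} := by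
  refine ⟨?_, ?_, ?_⟩
  · -- Part 1 : set equality
    ext p
    simp only [Set.mem_setOf_eq, Set.mem_diff, Set.mem_insert_iff, Set.mem_singleton_iff]
    constructor
    · rintro ⟨hc, hy⟩
      have hy' : p 1 ≠ 0 := by
        intro h; rw [h] at hy; norm_num at hy
      refine ⟨hc, ?_⟩
      rintro (rfl | rfl) <;> simp at hy'
    · rintro ⟨hc, hne⟩
      refine ⟨hc, ?_⟩
      have hy : p 1 ≠ 0 := by
        intro h
        rw [h] at hc
        have h2 : (p 0 - 1) * (p 0 + 1) = 0 := by nlinarith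
        rcases mul_eq_zero.1 h2 with h0 | h0
        · exact hne (Or.inl (by
            ext i; fin_cases i <;> simp [h] <;> linarith))
        · exact hne (Or.inr (by
            ext i; fin_cases i <;> simp [h] <;> linarith))
      rcases hy.lt_or_gt with h | h <;> nlinarith
  · -- Part 2 : two connected components
    set Ω := {p : EuclideanSpace ℝ (Fin 2) | (p 0) ^ 2 + (p 1) ^ 2 = 1 ∧ -(p 1) ^ 2 < 0} with hΩ
    set U := {p : EuclideanSpace ℝ (Fin 2) | (p 0) ^ 2 + (p 1) ^ 2 = 1 ∧ 0 < p 1} with hU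
    set L := {p : EuclideanSpace ℝ (Fin 2) | (p 0) ^ 2 + (p 1) ^ 2 = 1 ∧ p 1 < 0} with hL
    have hUΩ : U ⊆ Ω := fun p hp => ⟨hp.1, by nlinarith [hp.2]⟩
    have hLΩ : L ⊆ Ω := fun p hp => ⟨hp.1, by nlinarith [hp.2]⟩
    have hne : ∀ q : ↥Ω, q.1 1 ≠ 0 := by
      intro q h
      have h2 := q.2.2
      rw [h] at h2; norm_num at h2
    classical
    set f : ↥Ω → Bool := fun q => decide (0 < q.1 1) with hf
    have hy1 : Continuous fun p : EuclideanSpace ℝ (Fin 2) => p 1 :=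
      (EuclideanSpace.proj (1 : Fin 2) : EuclideanSpace ℝ (Fin 2) →L[ℝ] ℝ).continuous
    have hfc : Continuous f := by
      apply IsLocallyConstant.continuous
      rw [IsLocallyConstant.iff_isOpen_fiber]
      intro b
      cases b
      · have he : f ⁻¹' {false} =
            Subtype.val ⁻¹' {p : EuclideanSpace ℝ (Fin 2) | p 1 < 0} := by
          ext q
          simp only [Set.mem_preimage, Set.mem_singleton_iff, hf, decide_eq_false_iff_not,
            not_lt, Set.mem_setOf_eq]
          exact ⟨fun h => lt_of_le_of_ne h (hne q), fun h => le_of_lt h⟩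
        rw [he]
        exact ((isOpen_Iio.preimage hy1).preimage continuous_subtype_val)
      · have he : f ⁻¹' {true} =
            Subtype.val ⁻¹' {p : EuclideanSpace ℝ (Fin 2) | 0 < p 1} := by
          ext q
          simp [hf]
        rw [he]
        exact ((isOpen_Ioi.preimage hy1).preimage continuous_subtype_val)
    set g := hfc.connectedComponentsLift with hg
    have hsU : IsPreconnected (Subtype.val ⁻¹' U : Set ↥Ω) := by
      apply (Topology.IsInducing.subtypeVal).isPreconnected_image.mp
      rw [Subtype.image_preimage_coe, Set.inter_eq_self_of_subset_right hUΩ]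
      exact upper_pathConnected.isConnected.isPreconnected
    have hsL : IsPreconnected (Subtype.val ⁻¹' L : Set ↥Ω) := by
      apply (Topology.IsInducing.subtypeVal).isPreconnected_image.mp
      rw [Subtype.image_preimage_coe, Set.inter_eq_self_of_subset_right hLΩ]
      exact lower_pathConnected.isConnected.isPreconnected
    have hbij : Function.Bijective g := by
      constructor
      · intro x y
        obtain ⟨a, rfl⟩ := ConnectedComponents.surjective_coe x
        obtain ⟨b, rfl⟩ := ConnectedComponents.surjective_coe y
        intro hab
        rw [hg, hfc.connectedComponentsLift_apply_coe, hfc.connectedComponentsLift_apply_coe]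
          at hab
        have comp : b ∈ connectedComponent a := by
          rcases hb' : f a with hv | hv
          · have hb2 : f b = false := by rw [← hab, hb']
            have ha3 : a ∈ (Subtype.val ⁻¹' L : Set ↥Ω) := by
              simp only [hf, decide_eq_false_iff_not, not_lt] at hb'
              exact ⟨a.2.1, lt_of_le_of_ne hb' (hne a)⟩
            have hb3 : b ∈ (Subtype.val ⁻¹' L : Set ↥Ω) := by
              simp only [hf, decide_eq_false_iff_not, not_lt] at hb2
              exact ⟨b.2.1, lt_of_le_of_ne hb2 (hne b)⟩
            exact hsL.subset_connectedComponent ha3 hb3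
          · have hb2 : f b = true := by rw [← hab, hb']
            have ha3 : a ∈ (Subtype.val ⁻¹' U : Set ↥Ω) := by
              exact ⟨a.2.1, by simpa [hf] using hb'⟩
            have hb3 : b ∈ (Subtype.val ⁻¹' U : Set ↥Ω) := by
              exact ⟨b.2.1, by simpa [hf] using hb2⟩
            exact hsU.subset_connectedComponent ha3 hb3
        exact (ConnectedComponents.coe_eq_coe'.mpr comp).symm
      · intro b
        cases b
        · have hmem : (!₂[0, -1] : EuclideanSpace ℝ (Fin 2)) ∈ Ω := by
            constructor
            · show (0:ℝ) ^ 2 + (-1:ℝ) ^ 2 = 1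
              norm_num
            · show -(-1:ℝ) ^ 2 < 0
              norm_num
          refine ⟨(⟨!₂[0, -1], hmem⟩ : ↥Ω), ?_⟩
          rw [hg, hfc.connectedComponentsLift_apply_coe]
          simp [hf]
        · have hmem : (!₂[0, 1] : EuclideanSpace ℝ (Fin 2)) ∈ Ω := by
            constructor
            · show (0:ℝ) ^ 2 + (1:ℝ) ^ 2 = 1
              norm_num
            · show -(1:ℝ) ^ 2 < 0
              norm_num
          refine ⟨(⟨!₂[0, 1], hmem⟩ : ↥Ω), ?_⟩
          rw [hg, hfc.connectedComponentsLift_apply_coe]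
          simp [hf]
    rw [Nat.card_congr (Equiv.ofBijective g hbij)]
    simp [Nat.card_eq_fintype_card]
  · -- Part 3
    intro r hr
    constructor
    · refine ⟨!₂[-r, 0], ?_, ?_⟩
      · show (-r) ^ 2 + (0:ℝ) ^ 2 = r ^ 2
        ring
      · show (-r) ^ 3 - (0:ℝ) ^ 2 < 0
        nlinarith [pow_pos hr 3]
    · exact (Sr_pathConnected hr).isConnected
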